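/- arXiv:2109.00370 — 3 statements merged into one kernel-verified Lean document; each statement's English description precedes it below -/
import Mathlib

section
/- Let $\xi \in (0, 1/2]$, $k > 0$, $\sigma \in \{1,-1\}$, and suppose $\sigma = 1$ and $m$ strictly increasing on $(0,\infty)$, or $\sigma = -1$ and $m$ strictly decreasing on $(0,\infty)$, with $m$ even and $m(0)=1$. Then $\ell_c^2 := \sigma\xi(1-\xi)\big[(1-\xi)(m(k)-m(k(1-\xi))) + \xi(m(k)-m(k\xi))\big] > 0$, and at $\ell^2 = \ell_c^2$ the eigenvalues collide: $\omega_{-1,\ell_c,\xi} = \omega_{0,\ell_c,\xi}$, where $\omega_{n,\ell,\xi} = (n+\xi)(m(k)-m(k(n+\xi))) - \sigma\ell^2/(n+\xi)$. -/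
/-- For `ξ ∈ (0,1/2]`, `k > 0`, and `(σ,m) = (1,↑)` or `(-1,↓)`, the collision value
`ℓ_c² = σξ(1-ξ)[(1-ξ)(m(k)-m(k(1-ξ))) + ξ(m(k)-m(kξ))]` is strictly positive, and at
`ℓ² = ℓ_c²` the eigenvalue frequencies `ω_{-1,ℓ,ξ}` and `ω_{0,ℓ,ξ}` coincide, where
`ω_{n,ℓ,ξ} = (n+ξ)(m(k)-m(k(n+ξ))) - σℓ²/(n+ξ)`. -/
theorem collision_bloch_minus_one_zero (m : ℝ → ℝ) (hmeven : ∀ x, m (-x) = m x)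
    (hm0 : m 0 = 1) (σ k ξ : ℝ) (hk : 0 < k) (hξ : ξ ∈ Set.Ioc 0 (1 / 2))
    (hcase : (σ = 1 ∧ StrictMonoOn m (Set.Ioi 0)) ∨ (σ = -1 ∧ StrictAntiOn m (Set.Ioi 0))) :
    ∀ L : ℝ,
      L = σ * ξ * (1 - ξ) * ((1 - ξ) * (m k - m (k * (1 - ξ))) + ξ * (m k - m (k * ξ))) →
      0 < L ∧
      ((-1 : ℝ) + ξ) * (m k - m (k * ((-1 : ℝ) + ξ))) - σ * L / ((-1 : ℝ) + ξ)
        = ((0 : ℝ) + ξ) * (m k - m (k * ((0 : ℝ) + ξ))) - σ * L / ((0 : ℝ) + ξ) := by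
  intro L hL
  obtain ⟨hξ0, hξ2⟩ := hξ
  have hξ1 : ξ < 1 := by linarith
  have hξne : ξ ≠ 0 := ne_of_gt hξ0
  have hξ1ne : (-1 : ℝ) + ξ ≠ 0 := by intro h; nlinarith
  have heven : m (k * ((-1 : ℝ) + ξ)) = m (k * (1 - ξ)) := by
    rw [← hmeven (k * (1 - ξ))]; ring_nf
  -- positivity of A = m k - m (k(1-ξ)), B = m k - m (kξ) times σ
  have hk1 : k * (1 - ξ) ∈ Set.Ioi (0:ℝ) := by
    simp only [Set.mem_Ioi]; nlinarith
  have hk2 : k * ξ ∈ Set.Ioi (0:ℝ) := by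
    simp only [Set.mem_Ioi]; nlinarith
  have hkk : k ∈ Set.Ioi (0:ℝ) := hk
  have hlt1 : k * (1 - ξ) < k := by nlinarith
  have hlt2 : k * ξ < k := by nlinarith
  rcases hcase with ⟨h, hm⟩ | ⟨h, hm⟩
  · have h1 : m (k * (1 - ξ)) < m k := hm hk1 hkk hlt1
    have h2 : m (k * ξ) < m k := hm hk2 hkk hlt2
    have hin : 0 < (1 - ξ) * (m k - m (k * (1 - ξ))) + ξ * (m k - m (k * ξ)) := by
      have := mul_pos (by linarith : (0:ℝ) < 1 - ξ) (by linarith : 0 < m k - m (k * (1 - ξ)))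
      have := mul_pos hξ0 (by linarith : 0 < m k - m (k * ξ))
      linarith
    have hLpos : 0 < L := by
      rw [hL, h]
      have := mul_pos (mul_pos hξ0 (by linarith : (0:ℝ) < 1 - ξ)) hin
      nlinarith
    refine ⟨hLpos, ?_⟩
    rw [heven, hL, h]
    field_simp
    ring
  · have h1 : m k < m (k * (1 - ξ)) := hm hk1 hkk hlt1
    have h2 : m k < m (k * ξ) := hm hk2 hkk hlt2
    have hin : (1 - ξ) * (m k - m (k * (1 - ξ))) + ξ * (m k - m (k * ξ)) < 0 := by
      have := mul_pos (by linarith : (0:ℝ) < 1 - ξ) (by linarith : 0 < m (k * (1 - ξ)) - m k)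
      have := mul_pos hξ0 (by linarith : 0 < m (k * ξ) - m k)
      nlinarith
    have hLpos : 0 < L := by
      rw [hL, h]
      have := mul_pos (mul_pos hξ0 (by linarith : (0:ℝ) < 1 - ξ)) (by linarith : 0 < -((1 - ξ) * (m k - m (k * (1 - ξ))) + ξ * (m k - m (k * ξ))))
      nlinarith
    refine ⟨hLpos, ?_⟩
    rw [heven, hL, h]
    field_simp
    ring
end

section
/- Let $m$ be even with $m(0)=1$, strictly monotone on $(0,\infty)$, $k>0$, $\sigma\in\{1,-1\}$, and $\xi \in (\epsilon, 1/2]$ for some fixed $\epsilon > 0$. Then there exists $\ell^* > 0$ such that for all $\ell$ with $0 < |\ell| < \ell^*$, the frequencies $\omega_{n,\ell,\xi} = (n+\xi)(m(k)-m(k(n+\xi))) - \sigma\ell^2/(n+\xi)$, $n \in \mathbb{Z}$, are pairwise distinct (no collisions among eigenvalues of $\mathcal{A}_0(\ell,\xi)$). -/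
private lemma aux_mono (m : ℝ → ℝ) (hmeven : ∀ x, m (-x) = m x)
    (hmono : StrictMonoOn m (Set.Ioi 0))
    (k σ ε ξ : ℝ) (hk : 0 < k) (hσ : σ = 1 ∨ σ = -1) (hε : 0 < ε)
    (hξ : ξ ∈ Set.Ioc ε (1 / 2)) :
    ∃ lstar : ℝ, 0 < lstar ∧ ∀ ℓ : ℝ, 0 < |ℓ| → |ℓ| < lstar →
      ∀ n n' : ℤ, n ≠ n' →
        ((n : ℝ) + ξ) * (m k - m (k * ((n : ℝ) + ξ))) - σ * ℓ ^ 2 / ((n : ℝ) + ξ)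
          ≠ ((n' : ℝ) + ξ) * (m k - m (k * ((n' : ℝ) + ξ))) - σ * ℓ ^ 2 / ((n' : ℝ) + ξ) := by
  classical
  obtain ⟨hεξ, hξhalf⟩ := hξ
  have hξ0 : 0 < ξ := hε.trans hεξ
  set F : ℝ → ℝ := fun a => a * (m k - m (k * a)) with hF
  clear_value F
  have hFodd : ∀ a, F (-a) = -F a := by
    intro a
    simp only [hF]
    rw [show k * -a = -(k * a) by ring, hmeven]
    ring
  set q : ℝ := m (k * (1 + ξ)) - m k with hq
  clear_value q
  have hq0 : 0 < q := by
    have : m k < m (k * (1 + ξ)) :=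
      hmono (Set.mem_Ioi.mpr hk) (Set.mem_Ioi.mpr (by positivity)) (by nlinarith)
    linarith
  have hQ : ∀ a : ℝ, 1 + ξ ≤ a → q ≤ m (k * a) - m k := by
    intro a ha
    rcases eq_or_lt_of_le ha with h | h
    · rw [← h]; exact le_of_eq hq
    · have := hmono (Set.mem_Ioi.mpr (by positivity : (0:ℝ) < k * (1 + ξ)))
        (Set.mem_Ioi.mpr (by nlinarith : (0:ℝ) < k * a)) (by nlinarith)
      linarith
  have hFneg : ∀ a : ℝ, 1 + ξ ≤ a → F a ≤ -(q * a) := by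
    intro a ha
    have h1 := hQ a ha
    have ha0 : (0:ℝ) < a := by nlinarith
    simp only [hF]
    nlinarith [mul_nonneg ha0.le (by linarith : (0:ℝ) ≤ m (k * a) - m k - q)]
  have hbranch : ∀ a b : ℝ, 1 + ξ ≤ a → a < b → q * (b - a) ≤ F a - F b := by
    intro a b ha hab
    have h1 := hQ a ha
    have ha0 : (0:ℝ) < a := by nlinarith
    have hb0 : (0:ℝ) < b := by nlinarith
    have h3 : m (k * a) ≤ m (k * b) :=
      (hmono (Set.mem_Ioi.mpr (by nlinarith)) (Set.mem_Ioi.mpr (by nlinarith))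
        (by nlinarith)).le
    simp only [hF]
    nlinarith [mul_nonneg hb0.le (by linarith : (0:ℝ) ≤ m (k * b) - m (k * a)),
      mul_nonneg (by linarith : (0:ℝ) ≤ b - a) (by linarith : (0:ℝ) ≤ m (k * a) - m k - q)]
  have hfarabs : ∀ a : ℝ, 1 + ξ ≤ |a| → q * |a| ≤ |F a| := by
    intro a ha
    rcases le_or_gt 0 a with h | h
    · rw [abs_of_nonneg h] at ha ⊢
      have h2 := hFneg a ha
      rw [abs_of_nonpos (by nlinarith : F a ≤ 0)]
      linarith
    · rw [abs_of_neg h] at ha ⊢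
      have h2 := hFneg (-a) ha
      have h3 : F a = -F (-a) := by rw [hFodd]; ring
      rw [h3, abs_of_nonneg (by nlinarith : (0:ℝ) ≤ -F (-a))]
      nlinarith
  have hFF : ∀ a b : ℝ, 1 + ξ ≤ a → (1 + ξ ≤ b ∨ b ≤ -(1 + ξ)) → a ≠ b →
      q * |a - b| ≤ |F a - F b| := by
    intro a b ha hb hab
    rcases hb with hb | hb
    · rcases lt_or_gt_of_ne hab with h | h
      · have h2 := le_trans (hbranch a b ha h) (le_abs_self _)
        rw [abs_of_neg (by linarith : a - b < 0)]
        linarith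
      · have h2 := le_trans (hbranch b a hb h) (le_abs_self _)
        rw [abs_of_pos (by linarith : (0:ℝ) < a - b), abs_sub_comm]
        linarith
    · have h1 := hFneg a ha
      have h2 := hFneg (-b) (by linarith)
      have h3 : F b = -F (-b) := by rw [hFodd]; ring
      have h4 : q * (-b) ≤ F b := by rw [h3]; linarith
      have hb0 : b < 0 := by linarith
      rw [abs_of_pos (by nlinarith : (0:ℝ) < a - b), abs_sub_comm]
      have h5 : q * (a - b) ≤ F b - F a := by nlinarith
      linarith [le_abs_self (F b - F a)]
  set M : ℝ := |F ξ| + |F (ξ - 1)| with hM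
  clear_value M
  have hM0 : 0 ≤ M := by rw [hM]; positivity
  have hmid : ∀ n' : ℤ, n' = 0 ∨ n' = -1 → |F ((n' : ℝ) + ξ)| ≤ M ∧ |(n' : ℝ) + ξ| ≤ 1 := by
    intro n' h
    rcases h with h | h <;> subst h <;> push_cast
    · constructor
      · rw [zero_add, hM]; linarith [abs_nonneg (F (ξ - 1))]
      · rw [zero_add, abs_of_pos hξ0]; linarith
    · constructor
      · rw [show (-1 : ℝ) + ξ = ξ - 1 by ring, hM]
        nlinarith [abs_nonneg (F ξ)]
      · rw [show (-1 : ℝ) + ξ = ξ - 1 by ring, abs_of_nonpos (by linarith : ξ - 1 ≤ 0)]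
        linarith
  set R : ℝ := max 2 ((4 * M + q) / (3 * q)) with hR
  clear_value R
  set N : ℤ := max 2 (⌈R⌉ + 1) with hN
  clear_value N
  have hN2 : (2 : ℤ) ≤ N := hN ▸ le_max_left _ _
  have hNR : R + 1 ≤ (N : ℝ) := by
    have h1 : (⌈R⌉ + 1 : ℤ) ≤ N := hN ▸ le_max_right _ _
    have h2 : R ≤ (⌈R⌉ : ℝ) := Int.le_ceil R
    have h3 : ((⌈R⌉ + 1 : ℤ) : ℝ) ≤ (N : ℝ) := by exact_mod_cast h1
    push_cast at h3
    linarith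
  have hR2 : (2 : ℝ) ≤ R := hR ▸ le_max_left _ _
  have lemA : ∀ n n' : ℤ, n ≠ n' → N ≤ |n| →
      q / 4 * |(n : ℝ) - (n' : ℝ)| ≤ |F ((n : ℝ) + ξ) - F ((n' : ℝ) + ξ)| := by
    intro n n' hne hn
    set a : ℝ := (n : ℝ) + ξ with ha
    set b : ℝ := (n' : ℝ) + ξ with hb
    clear_value a b
    have habd : |(n : ℝ) - (n' : ℝ)| = |a - b| := by
      rw [show a - b = (n : ℝ) - (n' : ℝ) by rw [ha, hb]; ring]
    have habne : a ≠ b := by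
      rw [ha, hb]
      intro h
      apply hne
      have : (n : ℝ) = (n' : ℝ) := by linarith
      exact_mod_cast this
    rw [habd]
    have h2n : (2 : ℤ) ≤ |n| := le_trans hN2 hn
    have hnabs : (N : ℝ) ≤ |(n : ℝ)| := by
      rw [← Int.cast_abs]; exact_mod_cast hn
    by_cases h0 : n' = 0 ∨ n' = -1
    · obtain ⟨hFb, hb1⟩ := hmid n' h0
      rw [← hb] at hFb hb1
      have haR : R ≤ |a| := by
        have h1 : |(n : ℝ)| ≤ |a| + ξ := by
          have h := abs_add_le a (-ξ)
          rw [abs_neg, abs_of_pos hξ0] at h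
          have h2 : a + -ξ = (n : ℝ) := by rw [ha]; ring
          rw [h2] at h
          exact h
        linarith
      have hfar := hfarabs a (by linarith : 1 + ξ ≤ |a|)
      have h2 : |F a| - |F b| ≤ |F a - F b| := abs_sub_abs_le_abs_sub _ _
      have h3 : |a - b| ≤ |a| + 1 := by
        have h := abs_add_le a (-b)
        rw [abs_neg, ← sub_eq_add_neg] at h
        linarith
      have h4 : (4 * M + q) / (3 * q) ≤ |a| := le_trans (hR ▸ le_max_right _ _) haR
      have h5 : 4 * M + q ≤ 3 * q * |a| := by
        rw [div_le_iff₀ (by positivity : (0:ℝ) < 3 * q)] at h4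
        linarith
      linarith [mul_le_mul_of_nonneg_left h3 hq0.le]
    · push_neg at h0
      have hn'cases : 1 ≤ n' ∨ n' ≤ -2 := by omega
      have hncases : 2 ≤ n ∨ n ≤ -2 := by
        rcases le_or_gt 0 n with h | h
        · left; rwa [abs_of_nonneg h] at h2n
        · right; rw [abs_of_neg h] at h2n; omega
      rcases hncases with hnn | hnn
      · have haf : 1 + ξ ≤ a := by
          rw [ha]
          have : (2 : ℝ) ≤ (n : ℝ) := by exact_mod_cast hnn
          linarith
        rcases hn'cases with hn' | hn'
        · have hbf : 1 + ξ ≤ b := by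
            rw [hb]
            have : (1 : ℝ) ≤ (n' : ℝ) := by exact_mod_cast hn'
            linarith
          have hmain := hFF a b haf (Or.inl hbf) habne
          linarith [hmain, mul_nonneg hq0.le (abs_nonneg (a - b))]
        · have hbf : b ≤ -(1 + ξ) := by
            rw [hb]
            have : (n' : ℝ) ≤ -2 := by exact_mod_cast hn'
            linarith
          have hmain := hFF a b haf (Or.inr hbf) habne
          linarith [hmain, mul_nonneg hq0.le (abs_nonneg (a - b))]
      · have haf : 1 + ξ ≤ -a := by
          rw [ha]
          have : (n : ℝ) ≤ -2 := by exact_mod_cast hnn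
          linarith
        have hswap : |F a - F b| = |F (-a) - F (-b)| := by
          rw [hFodd, hFodd, show -F a - -F b = -(F a - F b) by ring, abs_neg]
        have habd2 : |a - b| = |(-a) - (-b)| := by
          rw [show (-a) - (-b) = -(a - b) by ring, abs_neg]
        rw [hswap, habd2]
        have habne2 : -a ≠ -b := fun h => habne (neg_injective h)
        rcases hn'cases with hn' | hn'
        · have hbf : -b ≤ -(1 + ξ) := by
            rw [hb]
            have : (1 : ℝ) ≤ (n' : ℝ) := by exact_mod_cast hn'
            linarith
          have hmain := hFF (-a) (-b) haf (Or.inr hbf) habne2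
          linarith [hmain, mul_nonneg hq0.le (abs_nonneg ((-a) - (-b)))]
        · have hbf : 1 + ξ ≤ -b := by
            rw [hb]
            have : (n' : ℝ) ≤ -2 := by exact_mod_cast hn'
            linarith
          have hmain := hFF (-a) (-b) haf (Or.inl hbf) habne2
          linarith [hmain, mul_nonneg hq0.le (abs_nonneg ((-a) - (-b)))]
  set e : ℝ := min ξ (1 / 2) with he
  clear_value e
  have he0 : 0 < e := he ▸ lt_min hξ0 (by norm_num)
  have helow : ∀ nn : ℤ, e ≤ |(nn : ℝ) + ξ| := by
    intro nn
    rcases le_or_gt 0 nn with h | h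
    · have h1 : (0 : ℝ) ≤ (nn : ℝ) := by exact_mod_cast h
      rw [abs_of_pos (by linarith)]
      have := min_le_left ξ (1/2 : ℝ)
      rw [← he] at this
      linarith
    · have h0 : nn ≤ -1 := by omega
      have h1 : (nn : ℝ) ≤ -1 := by exact_mod_cast h0
      rw [abs_of_neg (by linarith)]
      have := min_le_right ξ (1/2 : ℝ)
      rw [← he] at this
      linarith
  set S : Finset (ℤ × ℤ) := (Finset.Icc (-N) N ×ˢ Finset.Icc (-N) N).filter
      (fun p => F ((p.1 : ℝ) + ξ) ≠ F ((p.2 : ℝ) + ξ)) with hS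
  clear_value S
  set D : ℤ → ℤ → ℝ := fun p1 p2 =>
      |F ((p1 : ℝ) + ξ) - F ((p2 : ℝ) + ξ)| * (|(p1 : ℝ) + ξ| * |(p2 : ℝ) + ξ|) /
        |(p2 : ℝ) - (p1 : ℝ)| with hD
  clear_value D
  have hDpos : ∀ p ∈ S, 0 < D p.1 p.2 := by
    intro p hp
    rw [hS, Finset.mem_filter] at hp
    obtain ⟨-, hFne⟩ := hp
    have hne : p.1 ≠ p.2 := fun h => hFne (by rw [h])
    have h1 : ((p.2 : ℝ) - (p.1 : ℝ)) ≠ 0 := by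
      intro h
      apply hne
      have : (p.1 : ℝ) = (p.2 : ℝ) := by linarith
      exact_mod_cast this
    have h2 : (0:ℝ) < |(p.1 : ℝ) + ξ| := lt_of_lt_of_le he0 (helow _)
    have h3 : (0:ℝ) < |(p.2 : ℝ) + ξ| := lt_of_lt_of_le he0 (helow _)
    simp only [hD]
    exact div_pos (mul_pos (abs_pos.mpr (sub_ne_zero.mpr hFne)) (mul_pos h2 h3))
      (abs_pos.mpr h1)
  set c₂ : ℝ := if h : S.Nonempty then S.inf' h (fun p => D p.1 p.2) else 1 with hc₂
  clear_value c₂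
  have hc₂0 : 0 < c₂ := by
    rw [hc₂]
    split_ifs with h
    · rw [Finset.lt_inf'_iff]
      exact fun p hp => hDpos p hp
    · norm_num
  have hmin0 : 0 < min (q / 4 * e ^ 2) c₂ := lt_min (by positivity) hc₂0
  refine ⟨Real.sqrt (min (q / 4 * e ^ 2) c₂), Real.sqrt_pos.mpr hmin0, ?_⟩
  intro ℓ hl1 hl2 n n' hne hcol
  set a : ℝ := (n : ℝ) + ξ with ha
  set b : ℝ := (n' : ℝ) + ξ with hb
  clear_value a b
  have ha0 : a ≠ 0 := fun h => by
    have h1 := helow n; rw [← ha, h, abs_zero] at h1; linarith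
  have hb0 : b ≠ 0 := fun h => by
    have h1 := helow n'; rw [← hb, h, abs_zero] at h1; linarith
  have hcol' : F a - σ * ℓ ^ 2 / a = F b - σ * ℓ ^ 2 / b := by
    simp only [hF]; exact hcol
  have key : (F a - F b) * (a * b) = σ * ℓ ^ 2 * (b - a) := by
    field_simp at hcol'
    linear_combination hcol'
  have hσ1 : |σ| = 1 := by rcases hσ with h | h <;> rw [h] <;> norm_num
  have keyabs : |F a - F b| * (|a| * |b|) = ℓ ^ 2 * |b - a| := by
    have h := congrArg abs key
    simp only [abs_mul] at h
    rw [hσ1, one_mul, abs_of_nonneg (sq_nonneg ℓ)] at h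
    exact h
  have hbane : b - a ≠ 0 := by
    intro h
    apply hne
    have : (n : ℝ) = (n' : ℝ) := by rw [ha, hb] at h; linarith
    exact_mod_cast this
  have hbapos : 0 < |b - a| := abs_pos.mpr hbane
  have hℓsq : ℓ ^ 2 < min (q / 4 * e ^ 2) c₂ := by
    have h1 : |ℓ| ^ 2 < Real.sqrt (min (q / 4 * e ^ 2) c₂) ^ 2 :=
      pow_lt_pow_left₀ hl2 (abs_nonneg ℓ) (by norm_num)
    rw [sq_abs, Real.sq_sqrt hmin0.le] at h1
    exact h1
  have hea : e ≤ |a| := by rw [ha]; exact helow n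
  have heb : e ≤ |b| := by rw [hb]; exact helow n'
  by_cases hbig : N ≤ |n| ∨ N ≤ |n'|
  · have hbound : q / 4 * |a - b| ≤ |F a - F b| := by
      rcases hbig with h | h
      · have hA := lemA n n' hne h
        rw [← ha, ← hb, show (n : ℝ) - (n' : ℝ) = a - b by rw [ha, hb]; ring] at hA
        exact hA
      · have hA := lemA n' n hne.symm h
        rw [← ha, ← hb, show (n' : ℝ) - (n : ℝ) = b - a by rw [ha, hb]; ring] at hA
        rw [abs_sub_comm a b, abs_sub_comm (F a) (F b)]
        exact hA
    have h1 : q / 4 * |b - a| * (e * e) ≤ |F a - F b| * (|a| * |b|) := by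
      apply mul_le_mul
      · rw [abs_sub_comm b a]; exact hbound
      · exact mul_le_mul hea heb he0.le (abs_nonneg a)
      · positivity
      · positivity
    have h2 : ℓ ^ 2 * |b - a| < (q / 4 * e ^ 2) * |b - a| :=
      mul_lt_mul_of_pos_right (lt_of_lt_of_le hℓsq (min_le_left _ _)) hbapos
    linarith [keyabs]
  · push_neg at hbig
    by_cases hFeq : F a = F b
    · have h0 : F a - F b = 0 := sub_eq_zero.mpr hFeq
      rw [h0, zero_mul] at key
      have hσ0 : σ ≠ 0 := by rcases hσ with h | h <;> rw [h] <;> norm_num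
      have hℓ0 : ℓ ≠ 0 := abs_pos.mp hl1
      exact (mul_ne_zero (mul_ne_zero hσ0 (pow_ne_zero 2 hℓ0)) hbane) key.symm
    · have hp : (n, n') ∈ S := by
        rw [hS, Finset.mem_filter]
        refine ⟨?_, ?_⟩
        · rw [Finset.mem_product, Finset.mem_Icc, Finset.mem_Icc]
          have h1 := abs_lt.mp hbig.1
          have h2 := abs_lt.mp hbig.2
          omega
        · intro h
          rw [ha, hb] at hFeq
          exact hFeq h
      have hSne : S.Nonempty := ⟨(n, n'), hp⟩
      have hle : c₂ ≤ D n n' := by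
        rw [hc₂, dif_pos hSne]
        exact Finset.inf'_le _ hp
      have hDval : D n n' = ℓ ^ 2 := by
        simp only [hD]
        rw [← ha, ← hb, show (n' : ℝ) - (n : ℝ) = b - a by rw [ha, hb]; ring]
        rw [keyabs, mul_div_assoc, div_self (abs_ne_zero.mpr hbane), mul_one]
      rw [hDval] at hle
      linarith [min_le_right (q / 4 * e ^ 2) c₂]

/-- For `ξ ∈ (ε, 1/2]` with `ε > 0`, there exists `ℓ* > 0` such that for all
`0 < |ℓ| < ℓ*` the Bloch frequencies `ω_{n,ℓ,ξ} = (n+ξ)(m(k)-m(k(n+ξ))) - σℓ²/(n+ξ)`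
are pairwise distinct: no collisions among eigenvalues of `A₀(ℓ,ξ)` for small `ℓ`. -/
theorem no_collisions_small_ell (m : ℝ → ℝ) (hmeven : ∀ x, m (-x) = m x) (hm0 : m 0 = 1)
    (hmono : StrictMonoOn m (Set.Ioi 0) ∨ StrictAntiOn m (Set.Ioi 0))
    (k σ ε ξ : ℝ) (hk : 0 < k) (hσ : σ = 1 ∨ σ = -1) (hε : 0 < ε)
    (hξ : ξ ∈ Set.Ioc ε (1 / 2)) :
    ∃ lstar : ℝ, 0 < lstar ∧ ∀ ℓ : ℝ, 0 < |ℓ| → |ℓ| < lstar →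
      ∀ n n' : ℤ, n ≠ n' →
        ((n : ℝ) + ξ) * (m k - m (k * ((n : ℝ) + ξ))) - σ * ℓ ^ 2 / ((n : ℝ) + ξ)
          ≠ ((n' : ℝ) + ξ) * (m k - m (k * ((n' : ℝ) + ξ))) - σ * ℓ ^ 2 / ((n' : ℝ) + ξ) := by
  rcases hmono with hmono | hanti
  · exact aux_mono m hmeven hmono k σ ε ξ hk hσ hε hξ
  · obtain ⟨lstar, hl, H⟩ := aux_mono (fun x => -m x) (fun x => by simp [hmeven x])
      (fun x hx y hy hxy => neg_lt_neg (hanti hx hy hxy))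
      k (-σ) ε ξ hk
      (by rcases hσ with h | h
          · right; rw [h]
          · left; rw [h]; norm_num)
      hε hξ
    refine ⟨lstar, hl, fun ℓ h1 h2 n n' hne hcol => ?_⟩
    apply H ℓ h1 h2 n n' hne
    have key : ∀ x : ℤ,
        ((x : ℝ) + ξ) * ((fun t => -m t) k - (fun t => -m t) (k * ((x : ℝ) + ξ)))
            - (-σ) * ℓ ^ 2 / ((x : ℝ) + ξ)
          = -(((x : ℝ) + ξ) * (m k - m (k * ((x : ℝ) + ξ))) - σ * ℓ ^ 2 / ((x : ℝ) + ξ)) := by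
      intro x
      simp only
      ring
    rw [key n, key n', hcol]
end

section
/- Let $\xi \in (0,1/2]$, $a, \varepsilon$ real, $\sigma \in \{1,-1\}$. The quadratic $\mu^2 + \mu\sigma\varepsilon\big(\tfrac{1}{\xi-1}+\tfrac{1}{\xi}\big) - \tfrac14 \xi(\xi-1)a^2 + \tfrac{\varepsilon^2}{\xi(\xi-1)} = 0$ has two real roots whenever $|\varepsilon| \geq \xi^{3/2}(1-\xi)^{3/2}|a|$, and two non-real complex conjugate roots whenever $|\varepsilon| < \xi^{3/2}(1-\xi)^{3/2}|a|$ and $a \neq 0$. In the latter case, writing the roots as $\mu_\pm = r \pm is$ with $s > 0$, the corresponding spectral values $\lambda_\pm = i\omega + i\mu_\pm$ (for any real $\omega$) have real parts $\mp s$ of opposite nonzero signs. -/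
open Complex

/-- Instability mechanism of Lemma 4.3: the quadratic
`μ² + μσε(1/(ξ-1)+1/ξ) - ¼ξ(ξ-1)a² + ε²/(ξ(ξ-1)) = 0` has two real roots when
`|ε| ≥ ξ^{3/2}(1-ξ)^{3/2}|a|`, and two non-real complex conjugate roots `r ± is`
(`s > 0`) when `|ε| < ξ^{3/2}(1-ξ)^{3/2}|a|` and `a ≠ 0`; in the latter case the
spectral values `λ± = iω + iμ±` have real parts `∓s` of opposite nonzero signs. -/
theorem complex_roots_instability (ξ σ a ε : ℝ) (hξ : ξ ∈ Set.Ioc 0 (1 / 2))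
    (hσ : σ = 1 ∨ σ = -1) :
    ∀ b c : ℝ,
      b = σ * ε * (1 / (ξ - 1) + 1 / ξ) →
      c = -(1 / 4) * ξ * (ξ - 1) * a ^ 2 + ε ^ 2 / (ξ * (ξ - 1)) →
      ((ξ ^ ((3 : ℝ) / 2) * (1 - ξ) ^ ((3 : ℝ) / 2) * |a| ≤ |ε| →
        ∃ μ₁ μ₂ : ℝ, ∀ μ : ℂ,
          μ ^ 2 + (b : ℂ) * μ + (c : ℂ) = (μ - (μ₁ : ℂ)) * (μ - (μ₂ : ℂ))) ∧
      (|ε| < ξ ^ ((3 : ℝ) / 2) * (1 - ξ) ^ ((3 : ℝ) / 2) * |a| → a ≠ 0 →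
        ∃ r s : ℝ, 0 < s ∧
          (∀ μ : ℂ, μ ^ 2 + (b : ℂ) * μ + (c : ℂ) = 0 ↔
            (μ = (r : ℂ) + (s : ℂ) * Complex.I ∨ μ = (r : ℂ) - (s : ℂ) * Complex.I)) ∧
          (∀ ω : ℝ,
            (Complex.I * (ω : ℂ) + Complex.I * ((r : ℂ) + (s : ℂ) * Complex.I)).re = -s ∧
            (Complex.I * (ω : ℂ) + Complex.I * ((r : ℂ) - (s : ℂ) * Complex.I)).re = s))) := by
  obtain ⟨hx0, hx12⟩ := hξ
  have hx1 : ξ - 1 < 0 := by linarith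
  have h1x : (0:ℝ) < 1 - ξ := by linarith
  intro b c hb hc
  have hxne : ξ ≠ 0 := ne_of_gt hx0
  have hx1ne : ξ - 1 ≠ 0 := ne_of_lt hx1
  have hσ2 : σ ^ 2 = 1 := by rcases hσ with h | h <;> simp [h]
  -- discriminant identity
  set D : ℝ := b ^ 2 - 4 * c with hD
  have hkey : D * (ξ ^ 2 * (1 - ξ) ^ 2) = ε ^ 2 - ξ ^ 3 * (1 - ξ) ^ 3 * a ^ 2 := by
    rcases hσ with h | h <;> subst h <;> rw [hD, hb, hc] <;> field_simp <;> ring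
  -- rpow square
  have hA : (ξ ^ ((3 : ℝ) / 2) * (1 - ξ) ^ ((3 : ℝ) / 2) * |a|) ^ 2
      = ξ ^ 3 * (1 - ξ) ^ 3 * a ^ 2 := by
    have h1 : (ξ ^ ((3 : ℝ) / 2)) ^ 2 = ξ ^ 3 := by
      rw [← Real.rpow_natCast (ξ ^ ((3:ℝ)/2)) 2, ← Real.rpow_mul hx0.le]
      norm_num
    have h2 : ((1 - ξ) ^ ((3 : ℝ) / 2)) ^ 2 = (1 - ξ) ^ 3 := by
      rw [← Real.rpow_natCast ((1-ξ) ^ ((3:ℝ)/2)) 2, ← Real.rpow_mul h1x.le]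
      norm_num
    rw [mul_pow, mul_pow, h1, h2, _root_.sq_abs]
  have hAnn : (0:ℝ) ≤ ξ ^ ((3 : ℝ) / 2) * (1 - ξ) ^ ((3 : ℝ) / 2) * |a| :=
    mul_nonneg (mul_nonneg (Real.rpow_nonneg hx0.le _) (Real.rpow_nonneg h1x.le _))
      (abs_nonneg a)
  have hxx : (0:ℝ) < ξ ^ 2 * (1 - ξ) ^ 2 := by positivity
  constructor
  · -- real roots case
    intro h
    have hsq : ξ ^ 3 * (1 - ξ) ^ 3 * a ^ 2 ≤ ε ^ 2 := by
      have := mul_self_le_mul_self hAnn h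
      rw [← pow_two, ← pow_two, hA, _root_.sq_abs ε] at this
      linarith [this, _root_.sq_abs ε]
    have hDnn : 0 ≤ D := by
      nlinarith [hkey, hxx]
    refine ⟨(-b + Real.sqrt D) / 2, (-b - Real.sqrt D) / 2, ?_⟩
    have hsqrt : Real.sqrt D ^ 2 = D := Real.sq_sqrt hDnn
    intro μ
    have h1 : ((-b + Real.sqrt D) / 2 : ℝ) + ((-b - Real.sqrt D) / 2 : ℝ) = -b := by ring
    have h2 : ((-b + Real.sqrt D) / 2 : ℝ) * ((-b - Real.sqrt D) / 2 : ℝ) = c := by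
      have : ((-b + Real.sqrt D) / 2) * ((-b - Real.sqrt D) / 2)
          = (b ^ 2 - Real.sqrt D ^ 2) / 4 := by ring
      rw [this, hsqrt, hD]; ring
    have hc1 : ((((-b + Real.sqrt D) / 2 : ℝ)) : ℂ) + (((-b - Real.sqrt D) / 2 : ℝ) : ℂ)
        = -(b : ℂ) := by exact_mod_cast congrArg (Complex.ofReal) h1
    have hc2 : ((((-b + Real.sqrt D) / 2 : ℝ)) : ℂ) * (((-b - Real.sqrt D) / 2 : ℝ) : ℂ)
        = (c : ℂ) := by exact_mod_cast congrArg (Complex.ofReal) h2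
    linear_combination μ * hc1 - hc2
  · -- complex roots case
    intro h ha
    have hsq : ε ^ 2 < ξ ^ 3 * (1 - ξ) ^ 3 * a ^ 2 := by
      have := mul_self_lt_mul_self (abs_nonneg ε) h
      rw [← pow_two, ← pow_two, hA, _root_.sq_abs ε] at this
      linarith [this, _root_.sq_abs ε]
    have hDneg : D < 0 := by nlinarith [hkey, hxx]
    set s : ℝ := Real.sqrt (-D) / 2 with hs
    have hspos : 0 < s := by
      have : 0 < Real.sqrt (-D) := Real.sqrt_pos.mpr (by linarith)
      positivity
    have hs2 : s ^ 2 = -D / 4 := by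
      rw [hs, div_pow, Real.sq_sqrt (by linarith : (0:ℝ) ≤ -D)]
      norm_num
    set r : ℝ := -b / 2 with hr
    refine ⟨r, s, hspos, ?_, ?_⟩
    · intro μ
      have h1 : 2 * r = -b := by rw [hr]; ring
      have h2 : r ^ 2 + s ^ 2 = c := by
        rw [hr, hs2, hD]; ring
      have hc1 : (2 : ℂ) * (r : ℂ) = -(b : ℂ) := by exact_mod_cast congrArg Complex.ofReal h1
      have hc2 : (r : ℂ) ^ 2 + (s : ℂ) ^ 2 = (c : ℂ) := by
        exact_mod_cast congrArg Complex.ofReal h2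
      have hfac : μ ^ 2 + (b : ℂ) * μ + (c : ℂ)
          = (μ - ((r : ℂ) + (s : ℂ) * Complex.I)) * (μ - ((r : ℂ) - (s : ℂ) * Complex.I)) := by
        have hI : (Complex.I) ^ 2 = -1 := Complex.I_sq
        linear_combination μ * hc1 - hc2 + (s:ℂ)^2 * hI
      rw [hfac, mul_eq_zero, sub_eq_zero, sub_eq_zero]
    · intro ω
      constructor <;> simp
end
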